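/- arXiv:1907.10332 — 3 statements merged into one kernel-verified Lean document; each statement's English description precedes it below -/
import Mathlib

section
/- For a ≠ 0, b ∈ ℝ, the functions f(x,z) = (c₃/(2a))e^{−2az}(ax+b) + (c₄/(2a))e^{2az}(ax+b) + (c₂/2)e^{−az} + c₅e^{az}, m(x,z) = −(c₃/(2a))e^{−2az} + (c₄/(2a))e^{2az} + c₆, τ(x,z) = c₃e^{−2az} + c₄e^{2az}, H₁(x,z) = c₂ a e^{−az} + 2c₃(ax+b)e^{−2az} satisfy the determining equations for symmetries of the Ornstein–Uhlenbeck SDE: (1/2)f_{xx} + (ax+b)f_x + f_z = a f + τ(ax+b) − H₁, (1/2)m_{xx} + (ax+b)m_x + m_z = τ, f_x = τ/2, m_x = 0, for all constants c₂,…,c₆ ∈ ℝ. -/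
private lemma exp_hd (k z : ℝ) :
    HasDerivAt (fun t : ℝ => Real.exp (k * t)) (k * Real.exp (k * z)) z := by
  simpa [Function.comp_def, mul_comm] using (Real.hasDerivAt_exp (k * z)).comp z ((hasDerivAt_id z).const_mul k)

/-- The functions `f, m, τ, H₁` of the paper satisfy the determining equations for
symmetries of the Ornstein–Uhlenbeck SDE. -/
theorem ou_doob_determining (a b c2 c3 c4 c5 c6 : ℝ) (ha : a ≠ 0) :
    let f : ℝ → ℝ → ℝ := fun x z =>
      c3 / (2 * a) * Real.exp (-2 * a * z) * (a * x + b)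
        + c4 / (2 * a) * Real.exp (2 * a * z) * (a * x + b)
        + c2 / 2 * Real.exp (-a * z) + c5 * Real.exp (a * z)
    let m : ℝ → ℝ → ℝ := fun _ z =>
      -(c3 / (2 * a)) * Real.exp (-2 * a * z) + c4 / (2 * a) * Real.exp (2 * a * z) + c6
    let τ : ℝ → ℝ → ℝ := fun _ z =>
      c3 * Real.exp (-2 * a * z) + c4 * Real.exp (2 * a * z)
    let H1 : ℝ → ℝ → ℝ := fun x z =>
      c2 * a * Real.exp (-a * z) + 2 * c3 * (a * x + b) * Real.exp (-2 * a * z)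
    ∀ x z : ℝ,
      (1 / 2) * deriv (fun t => deriv (fun s => f s z) t) x
          + (a * x + b) * deriv (fun s => f s z) x + deriv (fun t => f x t) z
        = a * f x z + τ x z * (a * x + b) - H1 x z ∧
      (1 / 2) * deriv (fun t => deriv (fun s => m s z) t) x
          + (a * x + b) * deriv (fun s => m s z) x + deriv (fun t => m x t) z
        = τ x z ∧
      deriv (fun s => f s z) x = τ x z / 2 ∧
      deriv (fun s => m s z) x = 0 := by
  intro f m τ H1 x z
  -- x-derivative of f
  have hfx : ∀ x' : ℝ, HasDerivAt (fun s => f s z)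
      (c3 / (2 * a) * Real.exp (-2 * a * z) * a + c4 / (2 * a) * Real.exp (2 * a * z) * a) x' := by
    intro x'
    have h1 : HasDerivAt (fun s : ℝ => c3 / (2 * a) * Real.exp (-2 * a * z) * (a * s + b))
        (c3 / (2 * a) * Real.exp (-2 * a * z) * (a * 1)) x' :=
      (((hasDerivAt_id x').const_mul a).add_const b).const_mul _
    have h2 : HasDerivAt (fun s : ℝ => c4 / (2 * a) * Real.exp (2 * a * z) * (a * s + b))
        (c4 / (2 * a) * Real.exp (2 * a * z) * (a * 1)) x' :=
      (((hasDerivAt_id x').const_mul a).add_const b).const_mul _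
    have := ((h1.add h2).add_const (c2 / 2 * Real.exp (-a * z))).add_const (c5 * Real.exp (a * z))
    simpa [f, mul_one] using this
  have hfx' : deriv (fun s => f s z) x
      = c3 / (2 * a) * Real.exp (-2 * a * z) * a + c4 / (2 * a) * Real.exp (2 * a * z) * a :=
    (hfx x).deriv
  have hfxx : (fun t => deriv (fun s => f s z) t) = fun _ =>
      c3 / (2 * a) * Real.exp (-2 * a * z) * a + c4 / (2 * a) * Real.exp (2 * a * z) * a :=
    funext fun t => (hfx t).deriv
  -- z-derivative of f
  have hfz : HasDerivAt (fun t => f x t)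
      ((c3 / (2 * a) * (-2 * a * Real.exp (-2 * a * z))) * (a * x + b)
        + (c4 / (2 * a) * (2 * a * Real.exp (2 * a * z))) * (a * x + b)
        + c2 / 2 * (-a * Real.exp (-a * z)) + c5 * (a * Real.exp (a * z))) z := by
    have h1 := ((exp_hd (-2 * a) z).const_mul (c3 / (2 * a))).mul_const (a * x + b)
    have h2 := ((exp_hd (2 * a) z).const_mul (c4 / (2 * a))).mul_const (a * x + b)
    have h3 := (exp_hd (-a) z).const_mul (c2 / 2)
    have h4 := (exp_hd a z).const_mul c5
    exact ((h1.add h2).add h3).add h4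
  -- x-derivative of m
  have hmx : ∀ x' : ℝ, HasDerivAt (fun s => m s z) 0 x' := fun x' => hasDerivAt_const x' _
  have hmxx : (fun t => deriv (fun s => m s z) t) = fun _ => (0 : ℝ) :=
    funext fun t => (hmx t).deriv
  -- z-derivative of m
  have hmz : HasDerivAt (fun t => m x t)
      (-(c3 / (2 * a)) * (-2 * a * Real.exp (-2 * a * z))
        + c4 / (2 * a) * (2 * a * Real.exp (2 * a * z)) + 0) z := by
    have h1 := (exp_hd (-2 * a) z).const_mul (-(c3 / (2 * a)))
    have h2 := (exp_hd (2 * a) z).const_mul (c4 / (2 * a))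
    exact (h1.add h2).add (hasDerivAt_const z c6)
  refine ⟨?_, ?_, ?_, (hmx x).deriv⟩
  · rw [hfxx, deriv_const, hfx', hfz.deriv]
    simp only [f, τ, H1]
    field_simp
    ring
  · rw [hmxx, deriv_const, (hmx x).deriv, hmz.deriv]
    simp only [τ]
    field_simp
    ring
  · rw [hfx']
    simp only [τ]
    field_simp
end

section
/- For a ≠ 0 and b ∈ ℝ, the infinitesimal transformation with f(x,z) = x/(2a) − b/(2a²) + e^{az}, m(x,z) = z/a, τ(x,z) = 1/a, H₁(x,z) = x satisfies the (Girsanov) determining equations of the Ornstein–Uhlenbeck SDE: (1/2)f_{xx} + (ax+b)f_x + f_z = a f + τ(ax+b) − H₁, (1/2)m_{xx} + (ax+b)m_x + m_z = τ, f_x = τ/2, m_x = 0; moreover H₁ = ∂_x k with k = x²/2, but L(k) = (1/2)k_{xx} + (ax+b)k_x + k_z = 1/2 + (ax+b)x ≢ 0, so this symmetry is not of Doob type. -/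
/-- The infinitesimal transformation with `f(x,z) = x/(2a) − b/(2a²) + e^{az}`,
`m(x,z) = z/a`, `τ = 1/a`, `H₁ = x` satisfies the (Girsanov) determining equations
of the Ornstein–Uhlenbeck SDE; moreover `H₁ = ∂ₓk` with `k = x²/2`, but
`L(k) = 1/2 + (ax+b)x` does not vanish identically, so this symmetry is not of
Doob type. -/
theorem ou_non_doob_symmetry (a b : ℝ) (ha : a ≠ 0) :
    let f : ℝ → ℝ → ℝ := fun x z => x / (2 * a) - b / (2 * a ^ 2) + Real.exp (a * z)
    let m : ℝ → ℝ → ℝ := fun _ z => z / a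
    let τ : ℝ → ℝ → ℝ := fun _ _ => 1 / a
    let H1 : ℝ → ℝ → ℝ := fun x _ => x
    let k : ℝ → ℝ := fun x => x ^ 2 / 2
    (∀ x z : ℝ,
      (1 / 2) * deriv (fun t => deriv (fun s => f s z) t) x
          + (a * x + b) * deriv (fun s => f s z) x + deriv (fun t => f x t) z
        = a * f x z + τ x z * (a * x + b) - H1 x z ∧
      (1 / 2) * deriv (fun t => deriv (fun s => m s z) t) x
          + (a * x + b) * deriv (fun s => m s z) x + deriv (fun t => m x t) z
        = τ x z ∧
      deriv (fun s => f s z) x = τ x z / 2 ∧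
      deriv (fun s => m s z) x = 0) ∧
    (∀ x z : ℝ, deriv k x = H1 x z) ∧
    ¬(∀ x : ℝ,
        (1 / 2) * deriv (fun t => deriv k t) x + (a * x + b) * deriv k x = 0) := by
  intro f m τ H1 k
  have hfx : ∀ z : ℝ, (deriv (fun s => f s z)) = fun _ => 1 / (2 * a) := by
    intro z
    funext x
    have : (fun s => f s z) = fun s => s / (2 * a) + (-(b / (2 * a ^ 2)) + Real.exp (a * z)) := by
      funext s; simp [f]; ring
    rw [this]
    rw [deriv_fun_add (by fun_prop) (by fun_prop)]
    simp [deriv_div_const]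
  have hfz : ∀ x z : ℝ, deriv (fun t => f x t) z = a * Real.exp (a * z) := by
    intro x z
    have : (fun t => f x t) = fun t => (x / (2 * a) - b / (2 * a ^ 2)) + Real.exp (a * t) := by
      funext t; simp [f]
    rw [this]
    rw [deriv_const_add]
    have : (fun t : ℝ => Real.exp (a * t)) = Real.exp ∘ (fun t => a * t) := rfl
    rw [this, deriv_comp _ (Real.differentiableAt_exp) (by fun_prop),
      deriv_const_mul _ differentiableAt_fun_id]
    simp [mul_comm]
  have hmx : ∀ z : ℝ, (deriv (fun s => m s z)) = fun _ => (0 : ℝ) := by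
    intro z; funext x; simp [m]
  have hk : deriv k = fun x => x := by
    funext x
    simp [k, deriv_div_const]
  refine ⟨fun x z => ?_, fun x z => by rw [hk], fun h => ?_⟩
  · refine ⟨?_, ?_, ?_, ?_⟩
    · rw [hfx, hfz]
      simp only [deriv_const]
      simp only [f, τ, H1]
      field_simp
      ring
    · rw [hmx]
      simp only [deriv_const]
      have : deriv (fun t => m x t) z = 1 / a := by
        simp only [m]
        rw [show (fun t : ℝ => t / a) = fun t : ℝ => t * (1/a) by funext t; ring]
        simp
      rw [this]
      simp [τ]
    · rw [hfx]; simp [τ]; ring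
    · rw [hmx]
  · have h0 := h 0
    rw [hk] at h0
    simp at h0
end

section
/- For a ≠ 0, b, σ₀ ∈ ℝ and x > 0, the functions f(x,z) = (1/2)c₁σ₀²xe^{−az} + c₃xe^{az}, m(x,z) = −(1/(2a))c₁σ₀²e^{−az} + (c₃/a)e^{az} + c₄, τ(x,z) = (1/2)c₁σ₀²e^{−az} + c₃e^{az}, k(x,z) = c₁(ax+b)e^{−az} + c₂, H₁ = σ₀√x·k_x, satisfy the Doob determining equations of the CIR model: (1/2)σ₀²x k_{xx} + (ax+b)k_x + k_z = 0, (1/2)σ₀²x f_{xx} + (ax+b)f_x + f_z = af + (ax+b)τ − σ₀²x k_x, (1/2)σ₀²x m_{xx} + (ax+b)m_x + m_z = τ, σ₀√x f_x − (σ₀/(2√x))f = (σ₀√x/2)τ, σ₀√x m_x = 0, for all constants c₁,…,c₄. -/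
private lemma hE (c z : ℝ) : HasDerivAt (fun t => Real.exp (c * t)) (c * Real.exp (c * z)) z := by
  simpa [mul_comm, Function.comp_def] using (Real.hasDerivAt_exp (c * z)).comp z ((hasDerivAt_id z).const_mul c)

/-- The functions `f, m, τ, k` satisfy the Doob determining equations of the CIR
model, with `H₁ = σ₀√x·k_x`, for all `x > 0`. -/
theorem cir_doob_determining (a b c1 c2 c3 c4 σ0 : ℝ) (ha : a ≠ 0) :
    let f : ℝ → ℝ → ℝ := fun x z =>
      (1 / 2) * c1 * σ0 ^ 2 * x * Real.exp (-a * z) + c3 * x * Real.exp (a * z)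
    let m : ℝ → ℝ → ℝ := fun _ z =>
      -(1 / (2 * a)) * c1 * σ0 ^ 2 * Real.exp (-a * z) + c3 / a * Real.exp (a * z) + c4
    let τ : ℝ → ℝ → ℝ := fun _ z =>
      (1 / 2) * c1 * σ0 ^ 2 * Real.exp (-a * z) + c3 * Real.exp (a * z)
    let k : ℝ → ℝ → ℝ := fun x z => c1 * (a * x + b) * Real.exp (-a * z) + c2
    ∀ x z : ℝ, 0 < x →
      (1 / 2) * σ0 ^ 2 * x * deriv (fun t => deriv (fun s => k s z) t) x
          + (a * x + b) * deriv (fun s => k s z) x + deriv (fun t => k x t) z = 0 ∧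
      (1 / 2) * σ0 ^ 2 * x * deriv (fun t => deriv (fun s => f s z) t) x
          + (a * x + b) * deriv (fun s => f s z) x + deriv (fun t => f x t) z
        = a * f x z + (a * x + b) * τ x z - σ0 ^ 2 * x * deriv (fun s => k s z) x ∧
      (1 / 2) * σ0 ^ 2 * x * deriv (fun t => deriv (fun s => m s z) t) x
          + (a * x + b) * deriv (fun s => m s z) x + deriv (fun t => m x t) z
        = τ x z ∧
      σ0 * Real.sqrt x * deriv (fun s => f s z) x
          - σ0 / (2 * Real.sqrt x) * f x z
        = σ0 * Real.sqrt x / 2 * τ x z ∧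
      σ0 * Real.sqrt x * deriv (fun s => m s z) x = 0 := by
  intro f m τ k x z hx
  have hsq : Real.sqrt x ^ 2 = x := Real.sq_sqrt hx.le
  have hs0 : Real.sqrt x ≠ 0 := by positivity
  -- k_x at any point
  have hkx : ∀ t : ℝ, deriv (fun s => k s z) t = c1 * a * Real.exp (-a * z) := by
    intro t
    have h : HasDerivAt (fun s => k s z) (c1 * a * Real.exp (-a * z)) t := by
      have := ((((hasDerivAt_id t).const_mul a).add_const b).const_mul c1).mul_const
        (Real.exp (-a * z)) |>.add_const c2
      exact this.congr_deriv (by ring)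
    exact h.deriv
  have hkxx : deriv (fun t => deriv (fun s => k s z) t) x = 0 := by
    simp only [hkx]; simp
  have hkz : deriv (fun t => k x t) z = c1 * (a * x + b) * (-a * Real.exp (-a * z)) := by
    have h := ((hE (-a) z).const_mul (c1 * (a * x + b))).add_const c2
    have h2 : HasDerivAt (fun t => k x t) (c1 * (a * x + b) * (-a * Real.exp (-a * z))) z := by
      exact h.congr_deriv (by ring)
    exact h2.deriv
  -- f_x at any point
  have hfx : ∀ t : ℝ, deriv (fun s => f s z) t
      = (1 / 2) * c1 * σ0 ^ 2 * Real.exp (-a * z) + c3 * Real.exp (a * z) := by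
    intro t
    have h : HasDerivAt (fun s => f s z)
        ((1 / 2) * c1 * σ0 ^ 2 * Real.exp (-a * z) + c3 * Real.exp (a * z)) t := by
      have := (((hasDerivAt_id t).const_mul ((1 / 2) * c1 * σ0 ^ 2)).mul_const
        (Real.exp (-a * z))).add (((hasDerivAt_id t).const_mul c3).mul_const (Real.exp (a * z)))
      exact this.congr_deriv (by ring)
    exact h.deriv
  have hfxx : deriv (fun t => deriv (fun s => f s z) t) x = 0 := by
    simp only [hfx]; simp
  have hfz : deriv (fun t => f x t) z
      = (1 / 2) * c1 * σ0 ^ 2 * x * (-a * Real.exp (-a * z)) + c3 * x * (a * Real.exp (a * z)) := by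
    have h := ((hE (-a) z).const_mul ((1 / 2) * c1 * σ0 ^ 2 * x)).add
      ((hE a z).const_mul (c3 * x))
    have h2 : HasDerivAt (fun t => f x t)
        ((1 / 2) * c1 * σ0 ^ 2 * x * (-a * Real.exp (-a * z)) + c3 * x * (a * Real.exp (a * z))) z := by
      exact h.congr_deriv (by ring)
    exact h2.deriv
  -- m
  have hmx : ∀ t : ℝ, deriv (fun s => m s z) t = 0 := by
    intro t; simp [m]
  have hmxx : deriv (fun t => deriv (fun s => m s z) t) x = 0 := by
    simp only [hmx]; simp
  have hmz : deriv (fun t => m x t) z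
      = -(1 / (2 * a)) * c1 * σ0 ^ 2 * (-a * Real.exp (-a * z)) + c3 / a * (a * Real.exp (a * z)) := by
    have h := (((hE (-a) z).const_mul (-(1 / (2 * a)) * c1 * σ0 ^ 2)).add
      ((hE a z).const_mul (c3 / a))).add_const c4
    have h2 : HasDerivAt (fun t => m x t)
        (-(1 / (2 * a)) * c1 * σ0 ^ 2 * (-a * Real.exp (-a * z))
          + c3 / a * (a * Real.exp (a * z))) z := by
      exact h.congr_deriv (by ring)
    exact h2.deriv
  refine ⟨?_, ?_, ?_, ?_, ?_⟩
  · rw [hkxx, hkx, hkz]; ring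
  · rw [hfxx, hfx, hfz, hkx]; simp only [f, τ]; ring
  · rw [hmxx, hmx, hmz]; simp only [τ]; field_simp; ring
  · rw [hfx]; simp only [f, τ]
    field_simp
    ring_nf
    rw [hsq]
    ring
  · rw [hmx]; ring
end
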